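/- arXiv:1701.01752 — 5 statements merged into one kernel-verified Lean document; each statement's English description precedes it below -/
import Mathlib

section
/- Let C be a coalgebra over a field K and let r : C ⊗ C → C ⊗ C be a coalgebra morphism. Define σ := (id_C ⊗ ε) ∘ r and τ := (ε ⊗ id_C) ∘ r. Then r = (σ ⊗ τ) ∘ Δ_{C⊗C}, and σ, τ are the unique pair of coalgebra morphisms C ⊗ C → C with this property. -/
open TensorProduct Coalgebra

section Aux

variable {K C : Type*} [Field K] [AddCommGroup C] [Module K C] [Coalgebra K C]

private lemma comul_tmul_repr (x y : C) :
    comul (R := K) (A := C ⊗[K] C) (x ⊗ₜ y) =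
      ∑ i ∈ (ℛ K x).index, ∑ j ∈ (ℛ K y).index,
        ((ℛ K x).left i ⊗ₜ (ℛ K y).left j) ⊗ₜ ((ℛ K x).right i ⊗ₜ[K] (ℛ K y).right j) := by
  simp only [TensorProduct.comul_def, LinearMap.comp_apply, AlgebraTensorModule.map_tmul]
  rw [← (ℛ K x).eq, ← (ℛ K y).eq]
  simp [TensorProduct.sum_tmul, TensorProduct.tmul_sum, tensorTensorTensorComm_tmul]
  exact Finset.sum_comm

private lemma counit_tmul' (x y : C) :
    counit (R := K) (A := C ⊗[K] C) (x ⊗ₜ y) = counit (R := K) x * counit (R := K) y := by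
  simp [TensorProduct.counit_def, mul_comm]

private lemma sum_counit_smul_left {a : C} {ι : Type*} (repr : Coalgebra.Repr K a ι) :
    ∑ i ∈ repr.index, counit (R := K) (repr.right i) • repr.left i = a := by
  have := sum_tmul_counit_eq repr
  apply_fun (TensorProduct.rid K C) at this
  simpa only [map_sum, TensorProduct.rid_tmul, one_smul] using this

private lemma sum_counit_smul_right {a : C} {ι : Type*} (repr : Coalgebra.Repr K a ι) :
    ∑ i ∈ repr.index, counit (R := K) (repr.left i) • repr.right i = a := by
  have := sum_counit_tmul_eq repr
  apply_fun (TensorProduct.lid K C) at this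
  simpa only [map_sum, TensorProduct.lid_tmul, one_smul] using this

private lemma sum_counit_mul {a : C} {ι : Type*} (repr : Coalgebra.Repr K a ι) :
    ∑ i ∈ repr.index, counit (R := K) (repr.left i) * counit (R := K) (repr.right i)
      = counit (R := K) a := by
  have := congrArg (counit (R := K)) (sum_counit_smul_right repr)
  simpa [map_sum, smul_eq_mul] using this

private lemma sum_counit_mul' {a : C} {ι : Type*} (repr : Coalgebra.Repr K a ι) :
    ∑ i ∈ repr.index, counit (R := K) (repr.right i) * counit (R := K) (repr.left i)
      = counit (R := K) a := by
  rw [← sum_counit_mul repr]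
  exact Finset.sum_congr rfl fun i _ => mul_comm _ _

/-- `(id ⊗ ε)` followed by `rid`, as a coalgebra morphism `C ⊗ C → C`. -/
private noncomputable def sigma0 : (C ⊗[K] C) →ₗc[K] C where
  toLinearMap := (TensorProduct.rid K C).toLinearMap ∘ₗ
    LinearMap.lTensor C (counit (R := K) (A := C))
  counit_comp := by
    apply TensorProduct.ext'
    intro x y
    simp [counit_tmul', mul_comm]
  map_comp_comul := by
    apply TensorProduct.ext'
    intro x y
    simp only [LinearMap.comp_apply, comul_tmul_repr x y, map_sum, map_tmul,
      LinearMap.coe_comp, Function.comp_apply, LinearMap.lTensor_tmul,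
      LinearEquiv.coe_coe, TensorProduct.rid_tmul, LinearMap.coe_coe]
    rw [map_smul, ← (ℛ K x).eq, Finset.smul_sum]
    simp only [TensorProduct.smul_tmul', tmul_smul, smul_smul]
    refine Finset.sum_congr rfl fun i _ => ?_
    rw [← TensorProduct.sum_tmul, ← Finset.sum_smul, sum_counit_mul' (ℛ K y)]

private lemma sigma0_apply (x y : C) :
    (sigma0 : (C ⊗[K] C) →ₗc[K] C) (x ⊗ₜ y) = counit (R := K) y • x := by
  simp [sigma0]

/-- `(ε ⊗ id)` followed by `lid`, as a coalgebra morphism `C ⊗ C → C`. -/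
private noncomputable def tau0 : (C ⊗[K] C) →ₗc[K] C where
  toLinearMap := (TensorProduct.lid K C).toLinearMap ∘ₗ
    LinearMap.rTensor C (counit (R := K) (A := C))
  counit_comp := by
    apply TensorProduct.ext'
    intro x y
    simp [counit_tmul', mul_comm]
  map_comp_comul := by
    apply TensorProduct.ext'
    intro x y
    simp only [LinearMap.comp_apply, comul_tmul_repr x y, map_sum, map_tmul,
      LinearMap.coe_comp, Function.comp_apply, LinearMap.rTensor_tmul,
      LinearEquiv.coe_coe, TensorProduct.lid_tmul, LinearMap.coe_coe]
    rw [map_smul, ← (ℛ K y).eq, Finset.smul_sum]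
    simp only [TensorProduct.smul_tmul', tmul_smul, smul_smul]
    rw [Finset.sum_comm]
    refine Finset.sum_congr rfl fun j _ => ?_
    rw [← TensorProduct.sum_tmul, ← Finset.sum_smul, sum_counit_mul' (ℛ K x)]

private lemma tau0_apply (x y : C) :
    (tau0 : (C ⊗[K] C) →ₗc[K] C) (x ⊗ₜ y) = counit (R := K) x • y := by
  simp [tau0]


private lemma mapA :
    TensorProduct.map (sigma0 (K := K) (C := C)).toLinearMap (tau0 (K := K) (C := C)).toLinearMap
      ∘ₗ comul (R := K) (A := C ⊗[K] C) = LinearMap.id := by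
  apply TensorProduct.ext'
  intro x y
  rw [LinearMap.comp_apply, comul_tmul_repr x y, map_sum, LinearMap.id_apply]
  simp only [map_sum, map_tmul, CoalgHom.coe_toLinearMap, sigma0_apply, tau0_apply]
  conv_rhs => rw [← sum_counit_smul_left (ℛ K x), ← sum_counit_smul_right (ℛ K y)]
  rw [TensorProduct.sum_tmul]
  refine Finset.sum_congr rfl fun i _ => ?_
  rw [TensorProduct.tmul_sum]
  refine Finset.sum_congr rfl fun j _ => ?_
  simp [sigma0_apply, tau0_apply, CoalgHom.coe_toLinearMap, TensorProduct.smul_tmul',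
    tmul_smul, smul_smul, mul_comm]

private lemma sigma_unique (σ' τ' : (C ⊗[K] C) →ₗc[K] C) :
    (sigma0 (K := K) (C := C)).toLinearMap ∘ₗ (TensorProduct.map σ'.toLinearMap τ'.toLinearMap
      ∘ₗ comul (R := K) (A := C ⊗[K] C)) = σ'.toLinearMap := by
  apply TensorProduct.ext'
  intro x y
  have hτ := fun z => LinearMap.congr_fun τ'.counit_comp z
  simp only [LinearMap.comp_apply] at hτ ⊢
  rw [comul_tmul_repr x y]
  simp only [map_sum, map_tmul, CoalgHom.coe_toLinearMap, sigma0_apply, hτ, counit_tmul']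
  conv_rhs => rw [← sum_counit_smul_left (ℛ K x), ← sum_counit_smul_left (ℛ K y)]
  rw [TensorProduct.sum_tmul, map_sum]
  refine Finset.sum_congr rfl fun i _ => ?_
  rw [TensorProduct.tmul_sum, map_sum]
  refine Finset.sum_congr rfl fun j _ => ?_
  simp [sigma0_apply, CoalgHom.coe_toLinearMap, hτ, counit_tmul', TensorProduct.smul_tmul',
    tmul_smul, smul_smul, map_smul, mul_comm]
  rw [← TensorProduct.smul_tmul', map_smul]

private lemma tau_unique (σ' τ' : (C ⊗[K] C) →ₗc[K] C) :
    (tau0 (K := K) (C := C)).toLinearMap ∘ₗ (TensorProduct.map σ'.toLinearMap τ'.toLinearMap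
      ∘ₗ comul (R := K) (A := C ⊗[K] C)) = τ'.toLinearMap := by
  apply TensorProduct.ext'
  intro x y
  have hσ := fun z => LinearMap.congr_fun σ'.counit_comp z
  simp only [LinearMap.comp_apply] at hσ ⊢
  rw [comul_tmul_repr x y]
  simp only [map_sum, map_tmul, CoalgHom.coe_toLinearMap, tau0_apply, hσ, counit_tmul']
  conv_rhs => rw [← sum_counit_smul_right (ℛ K x), ← sum_counit_smul_right (ℛ K y)]
  rw [TensorProduct.sum_tmul, map_sum]
  refine Finset.sum_congr rfl fun i _ => ?_
  rw [TensorProduct.tmul_sum, map_sum]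
  refine Finset.sum_congr rfl fun j _ => ?_
  simp [tau0_apply, CoalgHom.coe_toLinearMap, hσ, counit_tmul', TensorProduct.smul_tmul',
    tmul_smul, smul_smul, map_smul, mul_comm]
  rw [← TensorProduct.smul_tmul', map_smul]

end Aux

/-- For a coalgebra morphism `r : C ⊗ C → C ⊗ C`, with `σ := (id ⊗ ε) ∘ r` and
`τ := (ε ⊗ id) ∘ r`, one has `r = (σ ⊗ τ) ∘ Δ_{C ⊗ C}`, and `σ`, `τ` are the unique pair of
coalgebra morphisms `C ⊗ C → C` with this property. -/
theorem coalgHom_factorization {K C : Type*} [Field K] [AddCommGroup C] [Module K C]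
    [Coalgebra K C] (r : (C ⊗[K] C) →ₗc[K] (C ⊗[K] C)) :
    let σ : C ⊗[K] C →ₗ[K] C :=
      (TensorProduct.rid K C).toLinearMap ∘ₗ
        LinearMap.lTensor C (counit (R := K) (A := C)) ∘ₗ r.toLinearMap
    let τ : C ⊗[K] C →ₗ[K] C :=
      (TensorProduct.lid K C).toLinearMap ∘ₗ
        LinearMap.rTensor C (counit (R := K) (A := C)) ∘ₗ r.toLinearMap
    r.toLinearMap = TensorProduct.map σ τ ∘ₗ (comul (R := K) (A := C ⊗[K] C)) ∧
    (∃ σc : (C ⊗[K] C) →ₗc[K] C, σc.toLinearMap = σ) ∧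
    (∃ τc : (C ⊗[K] C) →ₗc[K] C, τc.toLinearMap = τ) ∧
    (∀ σ' τ' : (C ⊗[K] C) →ₗc[K] C,
      r.toLinearMap =
        TensorProduct.map σ'.toLinearMap τ'.toLinearMap ∘ₗ (comul (R := K) (A := C ⊗[K] C)) →
      σ'.toLinearMap = σ ∧ τ'.toLinearMap = τ) := by
  intro σ τ
  have hσ : σ = (sigma0 (K := K) (C := C)).toLinearMap ∘ₗ r.toLinearMap := rfl
  have hτ : τ = (tau0 (K := K) (C := C)).toLinearMap ∘ₗ r.toLinearMap := rfl
  refine ⟨?_, ⟨sigma0.comp r, rfl⟩, ⟨tau0.comp r, rfl⟩, ?_⟩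
  · rw [hσ, hτ, TensorProduct.map_comp, LinearMap.comp_assoc, r.map_comp_comul,
      ← LinearMap.comp_assoc, mapA, LinearMap.id_comp]
  · intro σ' τ' h
    constructor
    · rw [hσ, h, ← LinearMap.comp_assoc]
      rw [LinearMap.comp_assoc, sigma_unique σ' τ']
    · rw [hτ, h, ← LinearMap.comp_assoc]
      rw [LinearMap.comp_assoc, tau_unique σ' τ']
end

section
/- Let C be a coalgebra over a field K, r : C² → C² a coalgebra automorphism, σ := (C ⊗ ε) ∘ r and τ := (ε ⊗ C) ∘ r. Then there exist linear maps σ̄, τ̄ : C² → C satisfying σ̄ ∘ (C ⊗ σ) ∘ (Δ ⊗ C) = σ ∘ (C ⊗ σ̄) ∘ (Δ ⊗ C) = ε ⊗ C and τ̄ ∘ (τ ⊗ C) ∘ (C ⊗ Δ) = τ ∘ (τ̄ ⊗ C) ∘ (C ⊗ Δ) = C ⊗ ε if and only if the two maps (C ⊗ σ) ∘ (Δ ⊗ C) and (τ ⊗ C) ∘ (C ⊗ Δ) from C² to C² are bijective; moreover in that case their compositional inverses are (C ⊗ σ̄) ∘ (Δ ⊗ C) and (τ̄ ⊗ C) ∘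 (C ⊗ Δ) respectively. -/
open TensorProduct Coalgebra

noncomputable section Aux
variable {K C : Type*} [CommSemiring K] [AddCommMonoid C] [Module K C] [Coalgebra K C]

def Gm (f : C ⊗[K] C →ₗ[K] C) : C ⊗[K] C →ₗ[K] C ⊗[K] C :=
  LinearMap.lTensor C f ∘ₗ (TensorProduct.assoc K C C C).toLinearMap ∘ₗ
    LinearMap.rTensor C (comul (R := K) (A := C))

def Hm (f : C ⊗[K] C →ₗ[K] C) : C ⊗[K] C →ₗ[K] C ⊗[K] C :=
  LinearMap.rTensor C f ∘ₗ (TensorProduct.assoc K C C C).symm.toLinearMap ∘ₗ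
    LinearMap.lTensor C (comul (R := K) (A := C))

def epsC : C ⊗[K] C →ₗ[K] C :=
  (TensorProduct.lid K C).toLinearMap ∘ₗ LinearMap.rTensor C (counit (R := K) (A := C))

def Ceps : C ⊗[K] C →ₗ[K] C :=
  (TensorProduct.rid K C).toLinearMap ∘ₗ LinearMap.lTensor C (counit (R := K) (A := C))

lemma Gm_tmul (f : C ⊗[K] C →ₗ[K] C) (x y : C) (repr : Coalgebra.Repr K x (C × C)) :
    Gm f (x ⊗ₜ[K] y) = ∑ i ∈ repr.index, repr.left i ⊗ₜ[K] f (repr.right i ⊗ₜ[K] y) := by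
  have : Gm f (x ⊗ₜ[K] y) =
      (LinearMap.lTensor C f) ((TensorProduct.assoc K C C C) ((comul x) ⊗ₜ[K] y)) := rfl
  rw [this, ← repr.eq, TensorProduct.sum_tmul, map_sum, map_sum]
  rfl

lemma Hm_tmul (f : C ⊗[K] C →ₗ[K] C) (x y : C) (repr : Coalgebra.Repr K y (C × C)) :
    Hm f (x ⊗ₜ[K] y) = ∑ i ∈ repr.index, f (x ⊗ₜ[K] repr.left i) ⊗ₜ[K] repr.right i := by
  have : Hm f (x ⊗ₜ[K] y) =
      (LinearMap.rTensor C f) ((TensorProduct.assoc K C C C).symm (x ⊗ₜ[K] (comul y))) := rfl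
  rw [this, ← repr.eq, TensorProduct.tmul_sum, map_sum, map_sum]
  rfl

lemma epsC_tmul (x y : C) : (epsC (K := K)) (x ⊗ₜ[K] y) = counit (R := K) x • y := rfl
lemma Ceps_tmul (x y : C) : (Ceps (K := K)) (x ⊗ₜ[K] y) = counit (R := K) y • x := by
  simp [Ceps]

lemma Gm_epsC : Gm (epsC (K := K) (C := C)) = LinearMap.id := by
  apply TensorProduct.ext'
  intro x y
  rw [Gm_tmul _ x y (ℛ K x)]
  have h := sum_tmul_counit_eq (ℛ K x)
  apply_fun LinearMap.lTensor C (LinearMap.toSpanSingleton K C y) at h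
  simp only [map_sum, LinearMap.lTensor_tmul, LinearMap.toSpanSingleton_apply, one_smul] at h
  simpa only [epsC_tmul, LinearMap.id_coe, id_eq] using h

lemma Hm_Ceps : Hm (Ceps (K := K) (C := C)) = LinearMap.id := by
  apply TensorProduct.ext'
  intro x y
  rw [Hm_tmul _ x y (ℛ K y)]
  have h := sum_counit_tmul_eq (ℛ K y)
  apply_fun LinearMap.rTensor C (LinearMap.toSpanSingleton K C x) at h
  simp only [map_sum, LinearMap.rTensor_tmul, LinearMap.toSpanSingleton_apply, one_smul] at h
  simpa only [Ceps_tmul, LinearMap.id_coe, id_eq] using h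

lemma epsC_Gm (f : C ⊗[K] C →ₗ[K] C) : epsC ∘ₗ Gm f = f := by
  apply TensorProduct.ext'
  intro x y
  have h := sum_counit_tmul_eq (ℛ K x)
  apply_fun (TensorProduct.lid K C) at h
  simp only [map_sum, lid_tmul, one_smul] at h
  rw [LinearMap.comp_apply, Gm_tmul f x y (ℛ K x), map_sum]
  conv_rhs => rw [← h]
  simp only [epsC_tmul, TensorProduct.sum_tmul, map_sum, ← TensorProduct.smul_tmul', map_smul]

lemma Ceps_Hm (f : C ⊗[K] C →ₗ[K] C) : Ceps ∘ₗ Hm f = f := by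
  apply TensorProduct.ext'
  intro x y
  have h := sum_tmul_counit_eq (ℛ K y)
  apply_fun (TensorProduct.rid K C) at h
  simp only [map_sum, rid_tmul, one_smul] at h
  rw [LinearMap.comp_apply, Hm_tmul f x y (ℛ K y), map_sum]
  conv_rhs => rw [← h]
  simp only [Ceps_tmul, TensorProduct.tmul_sum, map_sum, TensorProduct.tmul_smul, map_smul]

lemma Gm_comp (f g : C ⊗[K] C →ₗ[K] C) : Gm f ∘ₗ Gm g = Gm (f ∘ₗ Gm g) := by
  apply TensorProduct.ext'
  intro x y
  set repr := ℛ K x with hrepr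
  set a₁ : ∀ i, Coalgebra.Repr K (repr.left i) (C × C) := fun i => ℛ K _ with ha₁
  set a₂ : ∀ i, Coalgebra.Repr K (repr.right i) (C × C) := fun i => ℛ K _ with ha₂
  have key := sum_tmul_tmul_eq repr a₁ a₂
  apply_fun LinearMap.lTensor C
      (f ∘ₗ LinearMap.lTensor C (g ∘ₗ (TensorProduct.mk K C C).flip y)) at key
  simp only [map_sum, LinearMap.lTensor_tmul, LinearMap.comp_apply,
    TensorProduct.mk_apply, LinearMap.flip_apply] at key
  rw [LinearMap.comp_apply, Gm_tmul g x y repr, map_sum, Gm_tmul (f ∘ₗ Gm g) x y repr]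
  calc ∑ i ∈ repr.index, Gm f (repr.left i ⊗ₜ[K] g (repr.right i ⊗ₜ[K] y))
      = ∑ i ∈ repr.index, ∑ j ∈ (a₁ i).index,
          (a₁ i).left j ⊗ₜ[K] f ((a₁ i).right j ⊗ₜ[K] g (repr.right i ⊗ₜ[K] y)) := by
        exact Finset.sum_congr rfl fun i _ => Gm_tmul f _ _ (a₁ i)
    _ = ∑ i ∈ repr.index, ∑ j ∈ (a₂ i).index,
          repr.left i ⊗ₜ[K] f ((a₂ i).left j ⊗ₜ[K] g ((a₂ i).right j ⊗ₜ[K] y)) := key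
    _ = ∑ i ∈ repr.index, repr.left i ⊗ₜ[K] (f ∘ₗ Gm g) (repr.right i ⊗ₜ[K] y) := by
        refine Finset.sum_congr rfl fun i _ => ?_
        rw [LinearMap.comp_apply, Gm_tmul g _ y (a₂ i), map_sum, TensorProduct.tmul_sum]

lemma Hm_comp (f g : C ⊗[K] C →ₗ[K] C) : Hm f ∘ₗ Hm g = Hm (f ∘ₗ Hm g) := by
  apply TensorProduct.ext'
  intro x y
  set repr := ℛ K y with hrepr
  set a₁ : ∀ i, Coalgebra.Repr K (repr.left i) (C × C) := fun i => ℛ K _ with ha₁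
  set a₂ : ∀ i, Coalgebra.Repr K (repr.right i) (C × C) := fun i => ℛ K _ with ha₂
  have key := sum_tmul_tmul_eq repr a₁ a₂
  apply_fun (LinearMap.rTensor C (f ∘ₗ LinearMap.rTensor C (g ∘ₗ TensorProduct.mk K C C x)) ∘ₗ
      (TensorProduct.assoc K C C C).symm.toLinearMap) at key
  simp only [map_sum, LinearMap.comp_apply, LinearEquiv.coe_coe, assoc_symm_tmul,
    LinearMap.rTensor_tmul, TensorProduct.mk_apply] at key
  rw [LinearMap.comp_apply, Hm_tmul g x y repr, map_sum, Hm_tmul (f ∘ₗ Hm g) x y repr]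
  calc ∑ i ∈ repr.index, Hm f (g (x ⊗ₜ[K] repr.left i) ⊗ₜ[K] repr.right i)
      = ∑ i ∈ repr.index, ∑ j ∈ (a₂ i).index,
          f (g (x ⊗ₜ[K] repr.left i) ⊗ₜ[K] (a₂ i).left j) ⊗ₜ[K] (a₂ i).right j := by
        exact Finset.sum_congr rfl fun i _ => Hm_tmul f _ _ (a₂ i)
    _ = ∑ i ∈ repr.index, ∑ j ∈ (a₁ i).index,
          f (g (x ⊗ₜ[K] (a₁ i).left j) ⊗ₜ[K] (a₁ i).right j) ⊗ₜ[K] repr.right i := key.symm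
    _ = ∑ i ∈ repr.index, (f ∘ₗ Hm g) (x ⊗ₜ[K] repr.left i) ⊗ₜ[K] repr.right i := by
        refine Finset.sum_congr rfl fun i _ => ?_
        rw [LinearMap.comp_apply, Hm_tmul g x _ (a₁ i), map_sum, TensorProduct.sum_tmul]

end Aux

section Main
variable {K C : Type*} [Field K] [AddCommGroup C] [Module K C] [Coalgebra K C]

lemma Gm_id_of_left {f g : C ⊗[K] C →ₗ[K] C} (h : g ∘ₗ Gm f = epsC) :
    Gm g ∘ₗ Gm f = LinearMap.id := by
  rw [Gm_comp, h, Gm_epsC]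

lemma Hm_id_of_left {f g : C ⊗[K] C →ₗ[K] C} (h : g ∘ₗ Hm f = Ceps) :
    Hm g ∘ₗ Hm f = LinearMap.id := by
  rw [Hm_comp, h, Hm_Ceps]

omit [Coalgebra K C] in
lemma bij_of_id {f g : C ⊗[K] C →ₗ[K] C ⊗[K] C} (h1 : g ∘ₗ f = LinearMap.id)
    (h2 : f ∘ₗ g = LinearMap.id) : Function.Bijective f :=
  Function.bijective_iff_has_inverse.mpr
    ⟨g, fun x => by simpa using LinearMap.congr_fun h1 x,
      fun x => by simpa using LinearMap.congr_fun h2 x⟩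

lemma exists_Gm_bar {f : C ⊗[K] C →ₗ[K] C} (hf : Function.Bijective (Gm f)) :
    ∃ g : C ⊗[K] C →ₗ[K] C, g ∘ₗ Gm f = epsC ∧ f ∘ₗ Gm g = epsC := by
  set e := LinearEquiv.ofBijective (Gm f) hf with he
  refine ⟨epsC ∘ₗ (e.symm : C ⊗[K] C →ₗ[K] C ⊗[K] C), ?_, ?_⟩
  · apply LinearMap.ext; intro z
    have : Gm f z = e z := rfl
    simp [this]
  · have h1 : Gm (epsC ∘ₗ (e.symm : C ⊗[K] C →ₗ[K] C ⊗[K] C)) ∘ₗ Gm f = LinearMap.id := by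
      apply Gm_id_of_left
      apply LinearMap.ext; intro z
      have : Gm f z = e z := rfl
      simp [this]
    have h2 : Gm (epsC ∘ₗ (e.symm : C ⊗[K] C →ₗ[K] C ⊗[K] C)) =
        (e.symm : C ⊗[K] C →ₗ[K] C ⊗[K] C) := by
      apply LinearMap.ext; intro z
      obtain ⟨w, rfl⟩ := hf.2 z
      have hw : Gm f w = e w := rfl
      have h3 := LinearMap.congr_fun h1 w
      simp only [LinearMap.comp_apply, LinearMap.id_apply] at h3
      rw [h3, hw]; exact (e.symm_apply_apply w).symm
    rw [h2]
    conv_lhs => rw [← epsC_Gm f]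
    apply LinearMap.ext; intro z
    have : ∀ w, Gm f w = e w := fun _ => rfl
    simp [this]

lemma exists_Hm_bar {f : C ⊗[K] C →ₗ[K] C} (hf : Function.Bijective (Hm f)) :
    ∃ g : C ⊗[K] C →ₗ[K] C, g ∘ₗ Hm f = Ceps ∧ f ∘ₗ Hm g = Ceps := by
  set e := LinearEquiv.ofBijective (Hm f) hf with he
  refine ⟨Ceps ∘ₗ (e.symm : C ⊗[K] C →ₗ[K] C ⊗[K] C), ?_, ?_⟩
  · apply LinearMap.ext; intro z
    have : Hm f z = e z := rfl
    simp [this]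
  · have h1 : Hm (Ceps ∘ₗ (e.symm : C ⊗[K] C →ₗ[K] C ⊗[K] C)) ∘ₗ Hm f = LinearMap.id := by
      apply Hm_id_of_left
      apply LinearMap.ext; intro z
      have : Hm f z = e z := rfl
      simp [this]
    have h2 : Hm (Ceps ∘ₗ (e.symm : C ⊗[K] C →ₗ[K] C ⊗[K] C)) =
        (e.symm : C ⊗[K] C →ₗ[K] C ⊗[K] C) := by
      apply LinearMap.ext; intro z
      obtain ⟨w, rfl⟩ := hf.2 z
      have hw : Hm f w = e w := rfl
      have h3 := LinearMap.congr_fun h1 w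
      simp only [LinearMap.comp_apply, LinearMap.id_apply] at h3
      rw [h3, hw]; exact (e.symm_apply_apply w).symm
    rw [h2]
    conv_lhs => rw [← Ceps_Hm f]
    apply LinearMap.ext; intro z
    have : ∀ w, Hm f w = e w := fun _ => rfl
    simp [this]

end Main

/-- For a coalgebra automorphism `r` of `C² = C ⊗ C` with `σ := (C ⊗ ε) ∘ r`,
`τ := (ε ⊗ C) ∘ r`: maps `σ̄`, `τ̄` witnessing non-degeneracy exist if and only if the maps
`(C ⊗ σ) ∘ (Δ ⊗ C)` and `(τ ⊗ C) ∘ (C ⊗ Δ)` are bijective; and in that case their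
compositional inverses are `(C ⊗ σ̄) ∘ (Δ ⊗ C)` and `(τ̄ ⊗ C) ∘ (C ⊗ Δ)` respectively. -/
theorem nondegenerate_iff_bijective {K C : Type*} [Field K] [AddCommGroup C] [Module K C]
    [Coalgebra K C] (r : (C ⊗[K] C) ≃ₗc[K] (C ⊗[K] C)) :
    let σ : C ⊗[K] C →ₗ[K] C :=
      (TensorProduct.rid K C).toLinearMap ∘ₗ
        LinearMap.lTensor C (counit (R := K) (A := C)) ∘ₗ (r : C ⊗[K] C →ₗ[K] C ⊗[K] C)
    let τ : C ⊗[K] C →ₗ[K] C :=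
      (TensorProduct.lid K C).toLinearMap ∘ₗ
        LinearMap.rTensor C (counit (R := K) (A := C)) ∘ₗ (r : C ⊗[K] C →ₗ[K] C ⊗[K] C)
    -- `f ↦ (C ⊗ f) ∘ (Δ ⊗ C)`
    let G : (C ⊗[K] C →ₗ[K] C) → (C ⊗[K] C →ₗ[K] C ⊗[K] C) := fun f =>
      LinearMap.lTensor C f ∘ₗ (TensorProduct.assoc K C C C).toLinearMap ∘ₗ
        LinearMap.rTensor C (comul (R := K) (A := C))
    -- `f ↦ (f ⊗ C) ∘ (C ⊗ Δ)`
    let H : (C ⊗[K] C →ₗ[K] C) → (C ⊗[K] C →ₗ[K] C ⊗[K] C) := fun f =>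
      LinearMap.rTensor C f ∘ₗ (TensorProduct.assoc K C C C).symm.toLinearMap ∘ₗ
        LinearMap.lTensor C (comul (R := K) (A := C))
    -- `ε ⊗ C` and `C ⊗ ε`, viewed as maps `C² → C`
    let εC : C ⊗[K] C →ₗ[K] C :=
      (TensorProduct.lid K C).toLinearMap ∘ₗ LinearMap.rTensor C (counit (R := K) (A := C))
    let Cε : C ⊗[K] C →ₗ[K] C :=
      (TensorProduct.rid K C).toLinearMap ∘ₗ LinearMap.lTensor C (counit (R := K) (A := C))
    ((∃ σb τb : C ⊗[K] C →ₗ[K] C,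
        σb ∘ₗ G σ = εC ∧ σ ∘ₗ G σb = εC ∧ τb ∘ₗ H τ = Cε ∧ τ ∘ₗ H τb = Cε) ↔
      (Function.Bijective (G σ) ∧ Function.Bijective (H τ))) ∧
    (∀ σb τb : C ⊗[K] C →ₗ[K] C,
      (σb ∘ₗ G σ = εC ∧ σ ∘ₗ G σb = εC ∧ τb ∘ₗ H τ = Cε ∧ τ ∘ₗ H τb = Cε) →
      G σb ∘ₗ G σ = LinearMap.id ∧ G σ ∘ₗ G σb = LinearMap.id ∧
        H τb ∘ₗ H τ = LinearMap.id ∧ H τ ∘ₗ H τb = LinearMap.id) := by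
  intro σ τ G H εC Cε
  have hG : ∀ f, G f = Gm f := fun _ => rfl
  have hH : ∀ f, H f = Hm f := fun _ => rfl
  have hε : εC = epsC := rfl
  have hC : Cε = Ceps := rfl
  constructor
  · constructor
    · rintro ⟨σb, τb, h1, h2, h3, h4⟩
      rw [hG, hε] at h1 h2
      rw [hH, hC] at h3 h4
      exact ⟨by rw [hG]; exact bij_of_id (Gm_id_of_left h1) (Gm_id_of_left h2),
        by rw [hH]; exact bij_of_id (Hm_id_of_left h3) (Hm_id_of_left h4)⟩
    · rintro ⟨hσ, hτ⟩
      rw [hG] at hσ; rw [hH] at hτ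
      obtain ⟨σb, hs1, hs2⟩ := exists_Gm_bar hσ
      obtain ⟨τb, ht1, ht2⟩ := exists_Hm_bar hτ
      exact ⟨σb, τb, by rw [hG, hε]; exact hs1, by rw [hG, hε]; exact hs2,
        by rw [hH, hC]; exact ht1, by rw [hH, hC]; exact ht2⟩
  · rintro σb τb ⟨h1, h2, h3, h4⟩
    rw [hG, hε] at h1 h2
    rw [hH, hC] at h3 h4
    exact ⟨by rw [hG, hG]; exact Gm_id_of_left h1, by rw [hG, hG]; exact Gm_id_of_left h2,
      by rw [hH, hH]; exact Hm_id_of_left h3, by rw [hH, hH]; exact Hm_id_of_left h4⟩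
end

section
/- Let K be a field and let α₁, α₂, α₃, α₄, β₁, β₂, β₃, β₄, Γ₁, C ∈ K satisfy: C ≠ 0, α_i = 1 + Cβ_i for i = 1,2,3,4, α₁α₃ = α₂α₄, and Γ₁(α₁² − 1) = β₁(α₁β₃ + α₂β₄ + α₁α₃β₁ − β₁ − β₁α₁ − α₁β₂). Then β₁(α₁ + 1)(β₃α₁ − β₂ − Γ₁C) = 0. -/
/-- The algebraic identity `β₁(α₁ + 1)(β₃α₁ − β₂ − Γ₁C) = 0` used in the classification of
non-degenerate solutions of the braid equation on the incidence coalgebra of a chain. -/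
theorem case4_identity {K : Type*} [Field K]
    (α₁ α₂ α₃ α₄ β₁ β₂ β₃ β₄ Γ₁ C : K) (hC : C ≠ 0)
    (h1 : α₁ = 1 + C * β₁) (h2 : α₂ = 1 + C * β₂) (h3 : α₃ = 1 + C * β₃)
    (h4 : α₄ = 1 + C * β₄) (hA : α₁ * α₃ = α₂ * α₄)
    (hΓ : Γ₁ * (α₁ ^ 2 - 1)
      = β₁ * (α₁ * β₃ + α₂ * β₄ + α₁ * α₃ * β₁ - β₁ - β₁ * α₁ - α₁ * β₂)) :
    β₁ * (α₁ + 1) * (β₃ * α₁ - β₂ - Γ₁ * C) = 0 := by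
  subst h1 h2 h3 h4
  apply mul_left_cancel₀ hC
  rw [mul_zero]
  linear_combination β₁ * hA - C * hΓ
end

section
/- Let K be a field and α₁, α₂, α₃ ∈ K^×; set α₄ := α₁α₃/α₂. Let M be the 9 × 9 matrix over K which is zero except for the entries: M₁₁ = M₃₇ = M₇₃ = M₉₉ = 1, M₂₄ = α₂, M₄₂ = α₁, M₅₅ = α₁α₃, M₆₈ = α₄, M₈₆ = α₃. Then, viewing M as a linear endomorphism of V ⊗ V where V = K³ (with the basis of V ⊗ V ordered as e₁⊗e₁, e₁⊗e₂, e₁⊗e₃, e₂⊗e₁, …, e₃⊗e₃), the maps M₁ := M ⊗ id_V and M₂ := id_V ⊗ M on V ⊗ V ⊗ V satisfy the braid equation M₁ ∘ M₂ ∘ M₁ = M₂ ∘ M₁ ∘ M₂. -/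
open Matrix Kronecker


theorem flip_braid {K : Type*} [CommRing K] (c : Fin 3 → Fin 3 → K)
    (M' : Matrix (Fin 3 × Fin 3) (Fin 3 × Fin 3) K)
    (hM : ∀ p q, M' p q = if p.1 = q.2 ∧ p.2 = q.1 then c q.1 q.2 else 0) :
    (Matrix.reindex (Equiv.prodAssoc (Fin 3) (Fin 3) (Fin 3))
      (Equiv.prodAssoc (Fin 3) (Fin 3) (Fin 3)) (M' ⊗ₖ (1 : Matrix (Fin 3) (Fin 3) K))) *
    ((1 : Matrix (Fin 3) (Fin 3) K) ⊗ₖ M') *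
    (Matrix.reindex (Equiv.prodAssoc (Fin 3) (Fin 3) (Fin 3))
      (Equiv.prodAssoc (Fin 3) (Fin 3) (Fin 3)) (M' ⊗ₖ (1 : Matrix (Fin 3) (Fin 3) K))) =
    ((1 : Matrix (Fin 3) (Fin 3) K) ⊗ₖ M') *
    (Matrix.reindex (Equiv.prodAssoc (Fin 3) (Fin 3) (Fin 3))
      (Equiv.prodAssoc (Fin 3) (Fin 3) (Fin 3)) (M' ⊗ₖ (1 : Matrix (Fin 3) (Fin 3) K))) *
    ((1 : Matrix (Fin 3) (Fin 3) K) ⊗ₖ M') := by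
  ext ⟨a, b, cc⟩ ⟨d, e, f⟩
  simp only [Matrix.mul_apply, Matrix.reindex_apply, Matrix.submatrix_apply,
    Equiv.prodAssoc_symm_apply, Matrix.kroneckerMap_apply, Matrix.one_apply, hM,
    Fintype.sum_prod_type]
  simp [Finset.mul_sum, Finset.sum_mul, mul_ite, ite_and, Finset.sum_ite_eq, Finset.sum_ite_eq']
  split_ifs <;> first | ring | tauto

/-- View a `9 × 9` matrix as an endomorphism of `K³ ⊗ K³` via the lexicographically ordered
tensor basis, and assert that `M₁ := M ⊗ id₃` and `M₂ := id₃ ⊗ M` satisfy the braid equation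
`M₁M₂M₁ = M₂M₁M₂` on `K²⁷`. -/
def SatisfiesBraid {K : Type*} [Field K] (M : Matrix (Fin 9) (Fin 9) K) : Prop :=
  let e : Fin 3 × Fin 3 ≃ Fin 9 := finProdFinEquiv.trans (finCongr (by norm_num))
  let M' : Matrix (Fin 3 × Fin 3) (Fin 3 × Fin 3) K := Matrix.reindex e.symm e.symm M
  let M₁ : Matrix (Fin 3 × Fin 3 × Fin 3) (Fin 3 × Fin 3 × Fin 3) K :=
    Matrix.reindex (Equiv.prodAssoc (Fin 3) (Fin 3) (Fin 3))
      (Equiv.prodAssoc (Fin 3) (Fin 3) (Fin 3)) (M' ⊗ₖ (1 : Matrix (Fin 3) (Fin 3) K))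
  let M₂ : Matrix (Fin 3 × Fin 3 × Fin 3) (Fin 3 × Fin 3 × Fin 3) K :=
    (1 : Matrix (Fin 3) (Fin 3) K) ⊗ₖ M'
  M₁ * M₂ * M₁ = M₂ * M₁ * M₂

/-- Family 1 of the classification over the two-element chain yields solutions of the braid
equation. -/
theorem family1_braid {K : Type*} [Field K] (α₁ α₂ α₃ : K)
    (h₁ : α₁ ≠ 0) (h₂ : α₂ ≠ 0) (h₃ : α₃ ≠ 0) (α₄ : K) (hα₄ : α₄ = α₁ * α₃ / α₂) :
    SatisfiesBraid
      !![1, 0, 0, 0, 0, 0, 0, 0, 0;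
         0, 0, 0, α₂, 0, 0, 0, 0, 0;
         0, 0, 0, 0, 0, 0, 1, 0, 0;
         0, α₁, 0, 0, 0, 0, 0, 0, 0;
         0, 0, 0, 0, α₁ * α₃, 0, 0, 0, 0;
         0, 0, 0, 0, 0, 0, 0, α₄, 0;
         0, 0, 1, 0, 0, 0, 0, 0, 0;
         0, 0, 0, 0, 0, α₃, 0, 0, 0;
         0, 0, 0, 0, 0, 0, 0, 0, 1] := by
  unfold SatisfiesBraid
  refine flip_braid (fun i j => !![(1 : K), α₁, 1; α₂, α₁ * α₃, α₃; 1, α₄, 1] i j) _ ?_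
  rintro ⟨p1, p2⟩ ⟨q1, q2⟩
  fin_cases p1 <;> fin_cases p2 <;> fin_cases q1 <;> fin_cases q2 <;>
    first
      | rfl
      | (simp [finProdFinEquiv, finCongr, Fin.ext_iff]; try rfl)
end

section
/- Let K be a field, β₁, β₃ ∈ K with β₁ + β₃ ≠ 0. Consider the 9 × 9 matrix M over K given by: M₁₁ = M₃₇ = M₇₃ = M₉₉ = 1, M₁₂ = β₁, M₁₄ = −β₁, M₁₅ = β₁β₃, M₂₄ = 1, M₂₅ = −β₃, M₃₄ = β₁, M₃₅ = −β₁β₃, M₃₈ = −β₃, M₄₂ = 1, M₄₅ = β₃, M₅₅ = 1, M₆₅ = β₁, M₆₈ = 1, M₇₂ = −β₁, M₇₅ = −β₁β₃, M₇₆ = β₃, M₈₅ = −β₁, M₈₆ = 1, M₉₅ = β₁β₃, M₉₆ = −β₃, M₉₈ = β₃, and all other entries zero. Then M₁ := M ⊗ id₃ and M₂ := id₃ ⊗ M satisfy the braid equation M₁M₂M₁ = M₂M₁M₂ on K²⁷. -/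
open Matrix Kronecker

set_option maxHeartbeats 0

theorem braid_of {K : Type*} [Field K] (M : Matrix (Fin 9) (Fin 9) K)
    (m : Fin 3 → Fin 3 → Fin 3 → Fin 3 → K)
    (hm : ∀ i j k l, M (finProdFinEquiv.trans (finCongr (by norm_num)) (i, j))
        (finProdFinEquiv.trans (finCongr (by norm_num)) (k, l)) = m i j k l)
    (H : ∀ a b c d e f : Fin 3,
      ∑ x : Fin 3, ∑ z : Fin 3, ∑ y : Fin 3, m a b x y * m y c z f * m x z d e
      = ∑ y : Fin 3, ∑ z : Fin 3, ∑ x : Fin 3, m b c x z * m a x d y * m y z e f) :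
    SatisfiesBraid M := by
  unfold SatisfiesBraid
  ext ⟨a, b, c⟩ ⟨d, e, f⟩
  simp only [Matrix.mul_apply, Fintype.sum_prod_type, Matrix.reindex_apply,
    Matrix.submatrix_apply, Equiv.prodAssoc_symm_apply, Matrix.kroneckerMap_apply,
    Matrix.one_apply, Equiv.symm_symm, Equiv.symm_apply_apply, hm, mul_ite, mul_one, mul_zero,
    ite_mul, one_mul, zero_mul, Finset.sum_ite_eq, Finset.sum_ite_eq',
    Finset.mem_univ, if_true, Finset.sum_ite_irrel, Finset.sum_const_zero,
    Finset.sum_mul]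
  exact H a b c d e f

def vvv {K : Type*} [Field K] (β₁ β₃ : K) : Fin 3 → Fin 3 → Fin 3 → Fin 3 → K :=
  ![
  ![
    ![![1, β₁, 0], ![-β₁, β₁*β₃, 0], ![0, 0, 0]],
    ![![0, 0, 0], ![1, -β₃, 0], ![0, 0, 0]],
    ![![0, 0, 0], ![β₁, -β₁*β₃, 0], ![1, -β₃, 0]]],
  ![
    ![![0, 1, 0], ![0, β₃, 0], ![0, 0, 0]],
    ![![0, 0, 0], ![0, 1, 0], ![0, 0, 0]],
    ![![0, 0, 0], ![0, β₁, 0], ![0, 1, 0]]],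
  ![
    ![![0, -β₁, 1], ![0, -β₁*β₃, β₃], ![0, 0, 0]],
    ![![0, 0, 0], ![0, -β₁, 1], ![0, 0, 0]],
    ![![0, 0, 0], ![0, β₁*β₃, -β₃], ![0, β₃, 1]]]]

/-- The second family in case 3 of the classification (β₃ + β₄ = β₁ + β₂ = 0, Γ₁ = β₁β₃)
yields solutions of the braid equation. -/
theorem family3b_braid {K : Type*} [Field K] (β₁ β₃ : K) (h : β₁ + β₃ ≠ 0) :
    SatisfiesBraid
      !![1, β₁, 0, -β₁, β₁ * β₃, 0, 0, 0, 0;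
         0, 0, 0, 1, -β₃, 0, 0, 0, 0;
         0, 0, 0, β₁, -β₁ * β₃, 0, 1, -β₃, 0;
         0, 1, 0, 0, β₃, 0, 0, 0, 0;
         0, 0, 0, 0, 1, 0, 0, 0, 0;
         0, 0, 0, 0, β₁, 0, 0, 1, 0;
         0, -β₁, 1, 0, -β₁ * β₃, β₃, 0, 0, 0;
         0, 0, 0, 0, -β₁, 1, 0, 0, 0;
         0, 0, 0, 0, β₁ * β₃, -β₃, 0, β₃, 1] := by
  apply braid_of _ (vvv β₁ β₃)
  · intro i j k l
    fin_cases i <;> fin_cases j <;> fin_cases k <;> fin_cases l <;> rfl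
  · intro a b c d e f
    fin_cases a <;> fin_cases b <;> fin_cases c <;> fin_cases d <;> fin_cases e <;>
      fin_cases f <;>
      simp only [Fin.zero_eta, Fin.mk_one, Fin.reduceFinMk, vvv, Fin.sum_univ_three, Matrix.cons_val_zero, Matrix.cons_val_one,
        Matrix.cons_val_two, Matrix.head_cons, Matrix.tail_cons] <;>
      ring
end
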